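/- Let n ≥ 2, let I ⊆ ℝ be an interval, and let ω = (ω₁,…,ωₙ) be a positive Chebyshev system on I such that (ω₁,…,ω_{n−1}) is also a positive Chebyshev system on I. A function f : I → ℝ is ω-n-convex if and only if [x₂,…,x_{n+1};f]_ω ≥ [x₁,…,xₙ;f]_ω for all points x₁,…,x_{n+1} ∈ I with x₁ < ⋯ < x_{n+1}. -/

import Mathlib

/-- `chebV ω x` is the determinant `Vₙ(x₁,…,xₙ)` with `(i,j)` entry `ωᵢ(xⱼ)`. -/
noncomputable def chebV {n : ℕ} (ω : Fin n → ℝ → ℝ) (x : Fin n → ℝ) : ℝ :=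
  Matrix.det (Matrix.of fun i j => ω i (x j))

/-- `chebD ω f x` is the determinant `Dₙ(x₁,…,x_{n+1};f)` whose first `n` rows are
`ωᵢ(x₁),…,ωᵢ(x_{n+1})` and whose last row is `f(x₁),…,f(x_{n+1})`. -/
noncomputable def chebD {n : ℕ} (ω : Fin n → ℝ → ℝ) (f : ℝ → ℝ) (x : Fin (n + 1) → ℝ) : ℝ :=
  Matrix.det (Matrix.of (Fin.snoc (fun i j => ω i (x j)) (fun j => f (x j)) :
    Fin (n + 1) → Fin (n + 1) → ℝ))

/-- `ω = (ω₁,…,ωₙ)` is a Chebyshev system on `I`: the `ωᵢ` are continuous on `I` and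
`Vₙ(x₁,…,xₙ) ≠ 0` whenever `x₁ < ⋯ < xₙ` in `I`. -/
def IsChebyshevOn {n : ℕ} (ω : Fin n → ℝ → ℝ) (I : Set ℝ) : Prop :=
  (∀ i, ContinuousOn (ω i) I) ∧
    ∀ x : Fin n → ℝ, (∀ i, x i ∈ I) → StrictMono x → chebV ω x ≠ 0

/-- `ω = (ω₁,…,ωₙ)` is a positive Chebyshev system on `I`. -/
def IsPosChebyshevOn {n : ℕ} (ω : Fin n → ℝ → ℝ) (I : Set ℝ) : Prop :=
  (∀ i, ContinuousOn (ω i) I) ∧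
    ∀ x : Fin n → ℝ, (∀ i, x i ∈ I) → StrictMono x → 0 < chebV ω x

/-- The generalized divided difference `[x₁,…,x_{n+1};f]_ω = D_n(x₁,…,x_{n+1};f)/V_{n+1}(x₁,…,x_{n+1})`,
where the numerator is formed from the first `n` functions of the `(n+1)`-element system `ω`. -/
noncomputable def divDiff {n : ℕ} (ω : Fin (n + 1) → ℝ → ℝ) (f : ℝ → ℝ)
    (x : Fin (n + 1) → ℝ) : ℝ :=
  chebD (fun i : Fin n => ω i.castSucc) f x / chebV ω x

/-- `f` is `ω`-`(n+1)`-convex on `I` for the `(n+1)`-element system `ω`. -/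
def IsConvexOmega {n : ℕ} (ω : Fin (n + 1) → ℝ → ℝ) (I : Set ℝ) (f : ℝ → ℝ) : Prop :=
  ∀ x : Fin (n + 1) → ℝ, (∀ i, x i ∈ I) → StrictMono x →
    ∀ c : Fin (n + 1) → ℝ, (∀ i, (∑ k, c k * ω k (x i)) = f (x i)) →
      (∀ t ∈ I, t ≤ x 0 → 0 ≤ (-1 : ℝ) ^ (n + 1) * (f t - ∑ k, c k * ω k t)) ∧
      (∀ j : Fin n, ∀ t ∈ I, x j.castSucc ≤ t → t ≤ x j.succ →
        0 ≤ (-1 : ℝ) ^ (n + (j : ℕ) + 2) * (f t - ∑ k, c k * ω k t)) ∧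
      (∀ t ∈ I, x (Fin.last n) ≤ t → 0 ≤ f t - ∑ k, c k * ω k t)

/-! ### Auxiliary determinant machinery -/

/-- Determinant of the square matrix with first rows `W` and last row `r`. -/
noncomputable def DDet {n : ℕ} (W : Fin n → Fin (n + 1) → ℝ) (r : Fin (n + 1) → ℝ) : ℝ :=
  (Matrix.of (Fin.snoc W r : Fin (n + 1) → Fin (n + 1) → ℝ)).det

lemma updateRow_snoc {n : ℕ} (W : Fin n → Fin (n + 1) → ℝ) (r s : Fin (n + 1) → ℝ) :
    (Matrix.of (Fin.snoc W r : Fin (n + 1) → Fin (n + 1) → ℝ)).updateRow (Fin.last n) s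
      = Matrix.of (Fin.snoc W s : Fin (n + 1) → Fin (n + 1) → ℝ) := by
  ext i j
  refine Fin.lastCases ?_ ?_ i
  · simp
  · intro i
    rw [Matrix.updateRow_ne (Fin.castSucc_lt_last i).ne]
    simp

lemma DDet_eq_updateRow {n : ℕ} (W : Fin n → Fin (n + 1) → ℝ) (r s : Fin (n + 1) → ℝ) :
    DDet W s = ((Matrix.of (Fin.snoc W r : Fin (n + 1) → Fin (n + 1) → ℝ)).updateRow
      (Fin.last n) s).det := by
  unfold DDet; rw [updateRow_snoc]

lemma DDet_add {n : ℕ} (W : Fin n → Fin (n + 1) → ℝ) (r s : Fin (n + 1) → ℝ) :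
    DDet W (fun j => r j + s j) = DDet W r + DDet W s := by
  rw [DDet_eq_updateRow W r (fun j => r j + s j), DDet_eq_updateRow W r r,
    DDet_eq_updateRow W r s]
  exact Matrix.det_updateRow_add _ _ r s

lemma DDet_smul {n : ℕ} (W : Fin n → Fin (n + 1) → ℝ) (a : ℝ) (r : Fin (n + 1) → ℝ) :
    DDet W (fun j => a * r j) = a * DDet W r := by
  rw [DDet_eq_updateRow W r (fun j => a * r j), DDet_eq_updateRow W r r]
  exact Matrix.det_updateRow_smul _ _ a r

lemma DDet_row {n : ℕ} (W : Fin n → Fin (n + 1) → ℝ) (i : Fin n) :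
    DDet W (W i) = 0 := by
  apply Matrix.det_zero_of_row_eq (i_ne_j := (Fin.castSucc_lt_last i).ne)
  funext j
  simp

lemma DDet_sub_sum {n : ℕ} (W : Fin n → Fin (n + 1) → ℝ) (r : Fin (n + 1) → ℝ)
    (c : Fin n → ℝ) :
    DDet W (fun j => r j - ∑ k, c k * W k j) = DDet W r := by
  have key : ∀ s : Finset (Fin n),
      DDet W (fun j => r j - ∑ k ∈ s, c k * W k j) = DDet W r := by
    intro s
    induction s using Finset.induction with
    | empty => simp
    | @insert a s ha ih =>
      have h1 : (fun j => r j - ∑ k ∈ insert a s, c k * W k j)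
          = fun j => (r j - ∑ k ∈ s, c k * W k j) + (-c a) * W a j := by
        funext j
        rw [Finset.sum_insert ha]
        ring
      rw [h1, DDet_add, DDet_smul, DDet_row, mul_zero, add_zero, ih]
  exact key Finset.univ

lemma DDet_single {n : ℕ} (W : Fin n → Fin (n + 1) → ℝ) (r : Fin (n + 1) → ℝ)
    (k : Fin (n + 1)) (h : ∀ j, j ≠ k → r j = 0) :
    DDet W r = (-1) ^ (n + (k : ℕ)) * r k
      * (Matrix.of (fun i j : Fin n => W i (k.succAbove j))).det := by
  unfold DDet
  rw [Matrix.det_succ_row _ (Fin.last n)]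
  rw [Finset.sum_eq_single k]
  · have h1 : (Matrix.of (Fin.snoc W r : Fin (n+1) → Fin (n+1) → ℝ)) (Fin.last n) k = r k := by
      simp
    have h2 : ((Matrix.of (Fin.snoc W r : Fin (n+1) → Fin (n+1) → ℝ)).submatrix
        (Fin.last n).succAbove k.succAbove)
        = Matrix.of (fun i j : Fin n => W i (k.succAbove j)) := by
      ext i j
      simp [Matrix.submatrix_apply, Fin.succAbove_last_apply]
    rw [h1, h2]
    simp
  · intro b _ hb
    have : (Matrix.of (Fin.snoc W r : Fin (n+1) → Fin (n+1) → ℝ)) (Fin.last n) b = 0 := by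
      simp [h b hb]
    rw [this]
    ring
  · simp

lemma DDet_zero_row {n : ℕ} (W : Fin n → Fin (n + 1) → ℝ) (r : Fin (n + 1) → ℝ)
    (h : ∀ j, r j = 0) : DDet W r = 0 := by
  apply Matrix.det_eq_zero_of_row_eq_zero (Fin.last n)
  intro j
  simp [h j]

lemma chebD_eq_DDet {n : ℕ} (ω : Fin n → ℝ → ℝ) (f : ℝ → ℝ) (x : Fin (n + 1) → ℝ) :
    chebD ω f x = DDet (fun i j => ω i (x j)) (fun j => f (x j)) := rfl

lemma chebD_sub_interp {n : ℕ} (ω : Fin n → ℝ → ℝ) (f : ℝ → ℝ) (x : Fin (n + 1) → ℝ)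
    (c : Fin n → ℝ) :
    chebD ω (fun t => f t - ∑ k, c k * ω k t) x = chebD ω f x := by
  rw [chebD_eq_DDet, chebD_eq_DDet]
  exact DDet_sub_sum _ _ c

/-! ### Interpolation and `insertNth` lemmas -/

lemma exists_interp {n : ℕ} (ω : Fin n → ℝ → ℝ) (f : ℝ → ℝ) (x : Fin n → ℝ)
    (h : chebV ω x ≠ 0) :
    ∃ c : Fin n → ℝ, ∀ i, (∑ k, c k * ω k (x i)) = f (x i) := by
  set M : Matrix (Fin n) (Fin n) ℝ := Matrix.of fun k j => ω k (x j) with hMdef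
  have hM : IsUnit M.det := isUnit_iff_ne_zero.mpr h
  refine ⟨Matrix.vecMul (fun i => f (x i)) M⁻¹, fun i => ?_⟩
  have h2 : Matrix.vecMul (Matrix.vecMul (fun i => f (x i)) M⁻¹) M = fun i => f (x i) := by
    rw [Matrix.vecMul_vecMul, Matrix.nonsing_inv_mul M hM, Matrix.vecMul_one]
  have h3 := congrFun h2 i
  simpa [Matrix.vecMul, dotProduct, hMdef] using h3

lemma strictMono_insertNth {n : ℕ} (k : Fin (n + 1)) (t : ℝ) (x : Fin n → ℝ)
    (hx : StrictMono x)
    (hlt : ∀ i : Fin n, i.castSucc < k → x i < t)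
    (hgt : ∀ i : Fin n, k ≤ i.castSucc → t < x i) :
    StrictMono (k.insertNth t x) := by
  intro a b hab
  rcases eq_or_ne a k with rfl | ha
  · rcases eq_or_ne b a with rfl | hb
    · exact absurd hab (lt_irrefl _)
    · obtain ⟨j, rfl⟩ := Fin.exists_succAbove_eq hb
      rw [Fin.insertNth_apply_same, Fin.insertNth_apply_succAbove]
      apply hgt
      by_contra hc
      push_neg at hc
      rw [Fin.succAbove_of_castSucc_lt _ _ hc] at hab
      exact absurd (hab.trans hc) (lt_irrefl _)
  · obtain ⟨j, rfl⟩ := Fin.exists_succAbove_eq ha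
    rcases eq_or_ne b k with rfl | hb
    · rw [Fin.insertNth_apply_same, Fin.insertNth_apply_succAbove]
      apply hlt
      by_contra hc
      push_neg at hc
      rw [Fin.succAbove_of_le_castSucc _ _ hc] at hab
      exact absurd ((Fin.castSucc_lt_succ (i := j)).trans hab) (by simpa using (show b ≤ j.castSucc from hc).not_gt)
    · obtain ⟨l, rfl⟩ := Fin.exists_succAbove_eq hb
      rw [Fin.insertNth_apply_succAbove, Fin.insertNth_apply_succAbove]
      exact hx (Fin.succAbove_lt_succAbove_iff.mp hab)

lemma insertNth_mem {n : ℕ} {I : Set ℝ} (k : Fin (n + 1)) (t : ℝ) (x : Fin n → ℝ)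
    (ht : t ∈ I) (hx : ∀ i, x i ∈ I) :
    ∀ j, (k.insertNth t x : Fin (n + 1) → ℝ) j ∈ I := by
  intro j
  rcases eq_or_ne j k with rfl | hj
  · rw [Fin.insertNth_apply_same]; exact ht
  · obtain ⟨l, rfl⟩ := Fin.exists_succAbove_eq hj
    rw [Fin.insertNth_apply_succAbove]; exact hx l

lemma insertNth_last_self {n : ℕ} (z : Fin (n + 1) → ℝ) :
    (Fin.last n).insertNth (z (Fin.last n)) (z ∘ Fin.castSucc) = z := by
  funext j
  refine Fin.lastCases ?_ ?_ j
  · rw [Fin.insertNth_apply_same]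
  · intro i
    have h : (Fin.last n).succAbove i = i.castSucc := Fin.succAbove_last_apply i
    rw [← h, Fin.insertNth_apply_succAbove, h]
    rfl

/-! ### The key determinant evaluations -/

lemma chebD_insertNth {n : ℕ} (ω : Fin n → ℝ → ℝ) (f : ℝ → ℝ) (x : Fin n → ℝ)
    (c : Fin n → ℝ) (hc : ∀ i, (∑ k, c k * ω k (x i)) = f (x i)) (k : Fin (n + 1)) (t : ℝ) :
    chebD ω f (k.insertNth t x : Fin (n + 1) → ℝ)
      = (-1) ^ (n + (k : ℕ)) * (f t - ∑ k', c k' * ω k' t) * chebV ω x := by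
  rw [← chebD_sub_interp ω f (k.insertNth t x : Fin (n + 1) → ℝ) c, chebD_eq_DDet]
  rw [DDet_single _ _ k ?_]
  · congr 2
    · rw [Fin.insertNth_apply_same]
    · ext i j
      rw [Matrix.of_apply, Matrix.of_apply, Fin.insertNth_apply_succAbove]
  · intro j hj
    obtain ⟨l, rfl⟩ := Fin.exists_succAbove_eq hj
    rw [Fin.insertNth_apply_succAbove, hc l, sub_self]

lemma chebD_snoc_eq {n : ℕ} (ω : Fin n → ℝ → ℝ) (f : ℝ → ℝ) (z : Fin (n + 1) → ℝ)
    (c : Fin n → ℝ)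
    (hc : ∀ i, (∑ k, c k * ω k ((z ∘ Fin.castSucc) i)) = f ((z ∘ Fin.castSucc) i)) :
    chebD ω f z = (f (z (Fin.last n)) - ∑ k, c k * ω k (z (Fin.last n)))
      * chebV ω (z ∘ Fin.castSucc) := by
  have h := chebD_insertNth ω f (z ∘ Fin.castSucc) c hc (Fin.last n) (z (Fin.last n))
  rw [insertNth_last_self] at h
  rw [h, Fin.val_last]
  have : ((-1 : ℝ)) ^ (n + n) = 1 := Even.neg_one_pow ⟨n, rfl⟩
  rw [this, one_mul]

lemma DDet_omega_last {n : ℕ} (ω : Fin (n + 1) → ℝ → ℝ) (y : Fin (n + 1) → ℝ) :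
    DDet (fun (i : Fin n) j => ω i.castSucc (y j)) (fun j => ω (Fin.last n) (y j))
      = chebV ω y := by
  unfold DDet chebV
  congr 1
  ext i j
  refine Fin.lastCases ?_ ?_ i
  · simp
  · intro i; simp

lemma chebD_sub_interp' {n : ℕ} (ω : Fin (n + 1) → ℝ → ℝ) (f : ℝ → ℝ)
    (y : Fin (n + 1) → ℝ) (c : Fin (n + 1) → ℝ) :
    chebD (fun i : Fin n => ω i.castSucc) (fun t => f t - ∑ k, c k * ω k t) y
      = chebD (fun i : Fin n => ω i.castSucc) f y - c (Fin.last n) * chebV ω y := by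
  rw [chebD_eq_DDet, chebD_eq_DDet]
  have h1 : (fun j => (fun t => f t - ∑ k, c k * ω k t) (y j))
      = fun j => ((fun j' => f (y j') + (-(c (Fin.last n))) * ω (Fin.last n) (y j')) j
        - ∑ k : Fin n, c k.castSucc * (fun (i : Fin n) j' => ω i.castSucc (y j')) k j) := by
    funext j
    simp only [Fin.sum_univ_castSucc]
    ring
  rw [h1, DDet_sub_sum, DDet_add, DDet_smul, DDet_omega_last]
  ring

lemma chebD_sub_eq {n : ℕ} (ω : Fin (n + 1) → ℝ → ℝ) (f : ℝ → ℝ) (y : Fin (n + 1) → ℝ)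
    (c : Fin (n + 1) → ℝ) (hc : ∀ i, (∑ k, c k * ω k (y i)) = f (y i)) :
    chebD (fun i : Fin n => ω i.castSucc) f y = c (Fin.last n) * chebV ω y := by
  have hB := chebD_sub_interp' ω f y c
  have h0 : chebD (fun i : Fin n => ω i.castSucc) (fun t => f t - ∑ k, c k * ω k t) y = 0 := by
    rw [chebD_eq_DDet]
    apply DDet_zero_row
    intro j
    simp [hc j]
  linarith

lemma chebD_sub_succ {n : ℕ} (ω : Fin (n + 1) → ℝ → ℝ) (f : ℝ → ℝ) (z : Fin (n + 2) → ℝ)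
    (c : Fin (n + 1) → ℝ)
    (hc : ∀ i : Fin (n + 1), (∑ k, c k * ω k (z i.castSucc)) = f (z i.castSucc)) :
    chebD (fun i : Fin n => ω i.castSucc) f (z ∘ Fin.succ)
      = c (Fin.last n) * chebV ω (z ∘ Fin.succ)
        + (f (z (Fin.last (n + 1))) - ∑ k, c k * ω k (z (Fin.last (n + 1))))
          * chebV (fun i : Fin n => ω i.castSucc) (fun i : Fin n => z (i.succ.castSucc)) := by
  have hB := chebD_sub_interp' ω f (z ∘ Fin.succ) c
  have hD : chebD (fun i : Fin n => ω i.castSucc) (fun t => f t - ∑ k, c k * ω k t) (z ∘ Fin.succ)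
      = (f (z (Fin.last (n + 1))) - ∑ k, c k * ω k (z (Fin.last (n + 1))))
        * chebV (fun i : Fin n => ω i.castSucc) (fun i : Fin n => z (i.succ.castSucc)) := by
    rw [chebD_eq_DDet, DDet_single _ _ (Fin.last n) ?_]
    · have hsgn : ((-1 : ℝ)) ^ (n + ((Fin.last n : Fin (n + 1)) : ℕ)) = 1 := by
        rw [Fin.val_last]
        exact Even.neg_one_pow ⟨n, rfl⟩
      rw [hsgn, one_mul]
      congr 1
      · unfold chebV
        congr 1
        ext i j
        rw [Matrix.of_apply, Matrix.of_apply, Fin.succAbove_last_apply]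
        show ω i.castSucc (z (Fin.succ j.castSucc)) = _
        rw [Fin.succ_castSucc]
    · intro j hj
      obtain ⟨l, rfl⟩ := Fin.exists_castSucc_eq.mpr hj
      show f ((z ∘ Fin.succ) l.castSucc) - ∑ k, c k * ω k ((z ∘ Fin.succ) l.castSucc) = 0
      have hz : (z ∘ Fin.succ) l.castSucc = z l.succ.castSucc := by
        rw [Function.comp_apply, Fin.succ_castSucc]
      rw [hz, hc l.succ, sub_self]
  linarith

/-- **Corollary 1.** For a positive Chebyshev system `ω` of `m+2` functions whose initial
subsystem is also a positive Chebyshev system, `f` is `ω`-`n`-convex iff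
`[x₂,…,x_{n+1};f]_ω ≥ [x₁,…,xₙ;f]_ω` for all `x₁ < ⋯ < x_{n+1}` in `I`. -/
theorem isConvexOmega_iff_divDiff_mono {m : ℕ} (I : Set ℝ) (hI : I.OrdConnected)
    (ω : Fin (m + 2) → ℝ → ℝ)
    (hω : IsPosChebyshevOn ω I)
    (hω' : IsPosChebyshevOn (fun i : Fin (m + 1) => ω i.castSucc) I)
    (f : ℝ → ℝ) :
    IsConvexOmega ω I f ↔
      ∀ x : Fin (m + 3) → ℝ, (∀ i, x i ∈ I) → StrictMono x →
        divDiff ω f (x ∘ Fin.castSucc) ≤ divDiff ω f (x ∘ Fin.succ) := by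
  obtain ⟨hcont, hpos⟩ := hω
  obtain ⟨hcont', hpos'⟩ := hω'
  have core : ∀ z : Fin (m + 3) → ℝ, (∀ i, z i ∈ I) → StrictMono z →
      ((0 ≤ chebD ω f z) ↔ divDiff ω f (z ∘ Fin.castSucc) ≤ divDiff ω f (z ∘ Fin.succ)) := by
    intro z hzI hz
    have hcs : StrictMono (z ∘ Fin.castSucc) := hz.comp Fin.strictMono_castSucc
    have hsc : StrictMono (z ∘ Fin.succ) := hz.comp Fin.strictMono_succ
    have hVcs : 0 < chebV ω (z ∘ Fin.castSucc) := hpos _ (fun i => hzI _) hcs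
    have hVsc : 0 < chebV ω (z ∘ Fin.succ) := hpos _ (fun i => hzI _) hsc
    have hmid : StrictMono (fun i : Fin (m + 1) => z (i.succ.castSucc)) := by
      intro a b h
      exact hz (by simpa [Fin.castSucc_lt_castSucc_iff] using Fin.succ_lt_succ_iff.mpr h)
    have hVmid : 0 < chebV (fun i : Fin (m + 1) => ω i.castSucc)
        (fun i : Fin (m + 1) => z (i.succ.castSucc)) := hpos' _ (fun i => hzI _) hmid
    obtain ⟨c, hc⟩ := exists_interp ω f (z ∘ Fin.castSucc) hVcs.ne'
    have hc' : ∀ i : Fin (m + 2), (∑ k, c k * ω k (z i.castSucc)) = f (z i.castSucc) :=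
      fun i => hc i
    have h1 : chebD ω f z
        = (f (z (Fin.last (m + 2))) - ∑ k, c k * ω k (z (Fin.last (m + 2))))
          * chebV ω (z ∘ Fin.castSucc) := chebD_snoc_eq ω f z c hc
    have h2 : divDiff ω f (z ∘ Fin.castSucc) = c (Fin.last (m + 1)) := by
      unfold divDiff
      rw [chebD_sub_eq ω f _ c hc]
      exact mul_div_cancel_right₀ _ hVcs.ne'
    have h3 : divDiff ω f (z ∘ Fin.succ)
        = c (Fin.last (m + 1))
          + (f (z (Fin.last (m + 2))) - ∑ k, c k * ω k (z (Fin.last (m + 2))))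
            * (chebV (fun i : Fin (m + 1) => ω i.castSucc)
                (fun i : Fin (m + 1) => z (i.succ.castSucc)) / chebV ω (z ∘ Fin.succ)) := by
      unfold divDiff
      rw [chebD_sub_succ ω f z c hc', add_div, mul_div_cancel_right₀ _ hVsc.ne',
        mul_div_assoc]
    rw [h1, h2, h3, le_add_iff_nonneg_right,
      mul_nonneg_iff_of_pos_right hVcs,
      mul_nonneg_iff_of_pos_right (div_pos hVmid hVsc)]
  constructor
  · intro hconv z hzI hz
    apply (core z hzI hz).mp
    have hcs : StrictMono (z ∘ Fin.castSucc) := hz.comp Fin.strictMono_castSucc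
    have hVcs : 0 < chebV ω (z ∘ Fin.castSucc) := hpos _ (fun i => hzI _) hcs
    obtain ⟨c, hc⟩ := exists_interp ω f (z ∘ Fin.castSucc) hVcs.ne'
    obtain ⟨-, -, h3⟩ := hconv (z ∘ Fin.castSucc) (fun i => hzI _) hcs c hc
    have hE := h3 (z (Fin.last (m + 2))) (hzI _)
      (le_of_lt (hz (Fin.castSucc_lt_last (Fin.last (m + 1)))))
    rw [chebD_snoc_eq ω f z c hc]
    exact mul_nonneg hE hVcs.le
  · intro hdd x hxI hx c hc
    have hVx : 0 < chebV ω x := hpos x hxI hx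
    have keyD : ∀ z : Fin (m + 3) → ℝ, (∀ i, z i ∈ I) → StrictMono z →
        0 ≤ chebD ω f z := fun z hzI hz => (core z hzI hz).mpr (hdd z hzI hz)
    have main : ∀ (k : Fin (m + 3)) (t : ℝ), t ∈ I →
        (∀ i : Fin (m + 2), i.castSucc < k → x i < t) →
        (∀ i : Fin (m + 2), k ≤ i.castSucc → t < x i) →
        0 ≤ (-1 : ℝ) ^ ((m + 2) + (k : ℕ)) * (f t - ∑ k', c k' * ω k' t) := by
      intro k t ht hlt hgt
      have hz := strictMono_insertNth k t x hx hlt hgt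
      have hzI := insertNth_mem k t x ht hxI
      have h0 := keyD _ hzI hz
      rw [chebD_insertNth ω f x c hc k t] at h0
      exact (mul_nonneg_iff_of_pos_right hVx).mp h0
    refine ⟨?_, ?_, ?_⟩
    · intro t ht hle
      rcases eq_or_lt_of_le hle with heq | hlt0
      · rw [heq, hc 0]
        simp
      · have h := main 0 t ht
          (fun i hi => absurd hi (Fin.not_lt_zero _))
          (fun i _ => lt_of_lt_of_le hlt0 (hx.monotone (Fin.zero_le i)))
        have harith : (m + 2) + (((0 : Fin (m + 3))) : ℕ) = m + 1 + 1 := by simp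
        rw [harith] at h
        exact h
    · intro j t ht h1 h2
      rcases eq_or_lt_of_le h1 with heq | hlt1
      · rw [← heq, hc j.castSucc]
        simp
      rcases eq_or_lt_of_le h2 with heq2 | hlt2
      · rw [heq2, hc j.succ]
        simp
      · have h := main (j.succ.castSucc) t ht ?_ ?_
        · have harith : (m + 2) + ((j.succ.castSucc : Fin (m + 3)) : ℕ)
              = m + 1 + (j : ℕ) + 2 := by
            simp only [Fin.coe_castSucc, Fin.val_succ]
            omega
          rw [harith] at h
          exact h
        · intro i hi
          have hij : (i : ℕ) ≤ (j : ℕ) := by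
            have := hi
            simp only [Fin.lt_def, Fin.coe_castSucc, Fin.val_succ] at this
            omega
          have hle' : x i ≤ x j.castSucc := hx.monotone (by
            simp only [Fin.le_def, Fin.coe_castSucc]
            omega)
          exact lt_of_le_of_lt hle' hlt1
        · intro i hi
          have hij : (j : ℕ) + 1 ≤ (i : ℕ) := by
            simp only [Fin.le_def, Fin.coe_castSucc, Fin.val_succ] at hi
            omega
          have hle' : x j.succ ≤ x i := hx.monotone (by
            simp only [Fin.le_def, Fin.val_succ]
            omega)
          exact lt_of_lt_of_le hlt2 hle'
    · intro t ht hle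
      rcases eq_or_lt_of_le hle with heq | hlt0
      · rw [← heq, hc (Fin.last (m + 1))]
        simp
      · have h := main (Fin.last (m + 2)) t ht
          (fun i _ => lt_of_le_of_lt (hx.monotone (Fin.le_last i)) hlt0)
          (fun i hi => absurd hi (not_le.mpr (Fin.castSucc_lt_last i)))
        have hsgn : ((-1 : ℝ)) ^ ((m + 2) + ((Fin.last (m + 2) : Fin (m + 3)) : ℕ)) = 1 := by
          rw [Fin.val_last]
          exact Even.neg_one_pow ⟨m + 2, rfl⟩
        rw [hsgn, one_mul] at h
        exact h
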